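/- Let a, b be real numbers with a > 0 (interpreted as a = {α}^n) and b ≥ 0 (interpreted as b = {α}^{n−1}.{β}), n ≥ 2, a − n·b > 0, and s₀ ∈ (0,1). Set R := a/b (so R > n), A := 1 − (n/R)(1 − s₀), and define g(t) := ((A·t − s₀)/(t − s₀))^n · (a − (s₀(t−1)/(A·t − s₀))·n·b) for t ∈ [1, R/n]. Then g is strictly increasing on [1, R/n]. -/

import Mathlib

theorem g_strict_mono (n : ℕ) (hn : 2 ≤ n) (a b : ℝ) (ha : 0 < a) (hb : 0 < b)
    (hab : a - (n : ℝ) * b > 0) (s₀ : ℝ) (hs₀ : s₀ ∈ Set.Ioo (0 : ℝ) 1)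
    (R A : ℝ) (hR : R = a / b) (hA : A = 1 - ((n : ℝ) / R) * (1 - s₀)) :
    StrictMonoOn
      (fun t : ℝ => ((A * t - s₀) / (t - s₀)) ^ n *
        (a - (s₀ * (t - 1) / (A * t - s₀)) * (n : ℝ) * b))
      (Set.Icc 1 (R / (n : ℝ))) := by
  obtain ⟨hs0, hs1⟩ := hs₀
  have hn0 : (0:ℝ) < n := by positivity
  have hn2 : (2:ℝ) ≤ n := by exact_mod_cast hn
  have haR : a = R * b := by rw [hR]; field_simp
  have hRn : (n:ℝ) < R := by
    rw [hR, lt_div_iff₀ hb]; linarith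
  have hR0 : (0:ℝ) < R := by linarith
  have hA1 : A < 1 := by
    rw [hA]
    have : 0 < ((n:ℝ)/R) * (1 - s₀) := mul_pos (div_pos hn0 hR0) (by linarith)
    linarith
  have hAs : s₀ < A := by
    rw [hA]
    have h1 : ((n:ℝ)/R) < 1 := (div_lt_one hR0).2 hRn
    nlinarith [mul_pos (sub_pos.2 h1) (sub_pos.2 hs1)]
  have hA0 : 0 < A := lt_trans hs0 hAs
  -- key positivity facts on the interval
  have hts : ∀ t ∈ Set.Icc (1:ℝ) (R/(n:ℝ)), 0 < t - s₀ := by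
    intro t ht; have := ht.1; linarith
  have hAts : ∀ t ∈ Set.Icc (1:ℝ) (R/(n:ℝ)), 0 < A * t - s₀ := by
    intro t ht
    have h1 : (1:ℝ) ≤ t := ht.1
    nlinarith
  have hAR : A * R = R - (n:ℝ) * (1 - s₀) := by rw [hA]; field_simp
  -- key algebraic identity
  have key : ∀ t ∈ Set.Icc (1:ℝ) (R/(n:ℝ)),
      ((A * t - s₀) / (t - s₀)) ^ n *
        (a - (s₀ * (t - 1) / (A * t - s₀)) * (n : ℝ) * b)
      = b * (R - n) * ((A * t - s₀) / (t - s₀)) ^ (n - 1) := by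
    intro t ht
    have h1 : 0 < t - s₀ := hts t ht
    have h2 : 0 < A * t - s₀ := hAts t ht
    have step : a - (s₀ * (t - 1) / (A * t - s₀)) * (n : ℝ) * b
        = b * (R - n) * (t - s₀) / (A * t - s₀) := by
      rw [eq_div_iff h2.ne']
      have e : s₀ * (t - 1) / (A * t - s₀) * (n : ℝ) * b * (A * t - s₀) = s₀ * (t - 1) * n * b := by
        rw [div_mul_eq_mul_div, div_mul_eq_mul_div, div_mul_cancel₀ _ h2.ne']
      rw [sub_mul, e]
      linear_combination (b*t) * hAR + (A*t - s₀) * haR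
    have hpow : ((A*t-s₀)/(t-s₀))^n
        = ((A*t-s₀)/(t-s₀))^(n-1) * ((A*t-s₀)/(t-s₀)) := by
      rw [← pow_succ]; congr 1; omega
    rw [hpow, step]
    field_simp
  intro x hx y hy hxy
  simp only
  rw [key x hx, key y hy]
  have hx1 : 0 < x - s₀ := hts x hx
  have hy1 : 0 < y - s₀ := hts y hy
  have hx2 : 0 < A * x - s₀ := hAts x hx
  have hy2 : 0 < A * y - s₀ := hAts y hy
  have hmono : (A * x - s₀) / (x - s₀) < (A * y - s₀) / (y - s₀) := by
    rw [div_lt_div_iff₀ hx1 hy1]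
    nlinarith [mul_pos hs0 (sub_pos.2 hA1), sub_pos.2 hxy]
  have hpos : 0 < (A * x - s₀) / (x - s₀) := div_pos hx2 hx1
  have hc : 0 < b * (R - n) := by nlinarith
  exact mul_lt_mul_of_pos_left
    (pow_lt_pow_left₀ hmono hpos.le (by omega)) hc
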